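/- For any m ∈ ℕ and any symmetric subset H ⊆ ℤ_m containing 0 and 1: cos(π/m) · 𝒞ℱ_m(H) ≤ 𝒦_m(H) ≤ 𝒞ℱ_m(H). -/

import Mathlib

open Complex ComplexOrder Finset MeasureTheory

noncomputable section

def IsPosDef {G : Type*} [AddCommGroup G] (f : G → ℂ) : Prop :=
  ∀ (n : ℕ) (x : Fin n → G) (c : Fin n → ℂ),
    0 ≤ ∑ j, ∑ k, c j * (starRingEnd ℂ) (c k) * f (x j - x k)

namespace Aux15

variable {G : Type*} [AddCommGroup G]

lemma two_point {f : G → ℂ} (hf : IsPosDef f) (a b : G) (c d : ℂ) :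
    0 ≤ c * (starRingEnd ℂ) c * f 0 + c * (starRingEnd ℂ) d * f (a - b)
      + d * (starRingEnd ℂ) c * f (b - a) + d * (starRingEnd ℂ) d * f 0 := by
  have h := hf 2 ![a, b] ![c, d]
  simp only [Fin.sum_univ_two, Matrix.cons_val_zero, Matrix.cons_val_one, Matrix.head_cons,
    sub_self] at h
  convert h using 1
  ring

lemma herm {f : G → ℂ} (hf : IsPosDef f) (y : G) : f (-y) = (starRingEnd ℂ) (f y) := by
  have h0 : 0 ≤ f 0 := by
    have h := two_point hf (0 : G) 0 1 0
    simpa using h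
  have h1 := two_point hf y 0 1 1
  have h2 := two_point hf y 0 1 Complex.I
  rw [sub_zero, zero_sub] at h1 h2
  rw [Complex.nonneg_iff] at h0 h1 h2
  obtain ⟨-, h0im⟩ := h0
  obtain ⟨-, h1im⟩ := h1
  obtain ⟨-, h2im⟩ := h2
  simp only [map_one, one_mul, mul_one, Complex.add_im, Complex.mul_im, Complex.conj_re,
    Complex.conj_im, Complex.I_re, Complex.I_im, Complex.one_re, Complex.one_im,
    Complex.mul_re] at h0im h1im h2im
  apply Complex.ext
  · simp only [Complex.conj_re]; nlinarith [h2im]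
  · simp only [Complex.conj_im]; nlinarith [h1im]

lemma abs_le_one {f : G → ℂ} (hf : IsPosDef f) (hf0 : f 0 = 1) (y : G) :
    ‖f y‖ ≤ 1 := by
  rcases eq_or_ne (f y) 0 with h | h
  · simp [h]
  set r : ℝ := ‖f y‖ with hr
  have hrpos : 0 < r := by
    rw [hr]; exact norm_pos_iff.mpr h
  have h2 := two_point hf y 0 (r : ℂ) (-(f y))
  rw [sub_zero, zero_sub, herm hf y, hf0] at h2
  rw [Complex.nonneg_iff] at h2
  obtain ⟨h2re, -⟩ := h2
  have hab : (f y).re ^ 2 + (f y).im ^ 2 = r ^ 2 := by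
    rw [hr, ← Complex.normSq_eq_norm_sq, Complex.normSq_apply]; ring
  simp only [Complex.add_re, Complex.mul_re, Complex.mul_im, Complex.conj_re, Complex.conj_im,
    Complex.ofReal_re, Complex.ofReal_im, Complex.neg_re, Complex.neg_im, Complex.one_re,
    Complex.one_im, map_neg] at h2re
  have key : 0 ≤ 2*r^2 - 2*r^3 := by nlinarith [h2re, hab, hrpos]
  nlinarith [key, mul_pos hrpos hrpos]


lemma posdef_smul {f : G → ℂ} (hf : IsPosDef f) {t : ℝ} (ht : 0 ≤ t) :
    IsPosDef (fun x => (t : ℂ) * f x) := by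
  intro n x c
  have h := hf n x c
  have : ∑ j, ∑ k, c j * (starRingEnd ℂ) (c k) * ((t:ℂ) * f (x j - x k))
      = (t:ℂ) * ∑ j, ∑ k, c j * (starRingEnd ℂ) (c k) * f (x j - x k) := by
    rw [Finset.mul_sum]
    refine Finset.sum_congr rfl fun j _ => ?_
    rw [Finset.mul_sum]
    exact Finset.sum_congr rfl fun k _ => by ring
  rw [this]
  exact mul_nonneg (by exact_mod_cast Complex.zero_le_real.mpr ht) h

lemma posdef_add {f g : G → ℂ} (hf : IsPosDef f) (hg : IsPosDef g) :
    IsPosDef (fun x => f x + g x) := by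
  intro n x c
  have h := add_nonneg (hf n x c) (hg n x c)
  convert h using 1
  rw [← Finset.sum_add_distrib]
  refine Finset.sum_congr rfl fun j _ => ?_
  rw [← Finset.sum_add_distrib]
  exact Finset.sum_congr rfl fun k _ => by ring

lemma posdef_conj {f : G → ℂ} (hf : IsPosDef f) :
    IsPosDef (fun x => (starRingEnd ℂ) (f x)) := by
  intro n x c
  have h := hf n x (fun j => (starRingEnd ℂ) (c j))
  have him : (∑ j, ∑ k, (starRingEnd ℂ) (c j) * (starRingEnd ℂ) ((starRingEnd ℂ) (c k))
      * f (x j - x k)).im = 0 := by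
    rw [Complex.nonneg_iff] at h
    exact h.2.symm
  have h' : (0:ℂ) ≤ (starRingEnd ℂ)
      (∑ j, ∑ k, (starRingEnd ℂ) (c j) * (starRingEnd ℂ) ((starRingEnd ℂ) (c k)) * f (x j - x k)) := by
    rw [Complex.conj_eq_iff_im.mpr him]
    exact h
  convert h' using 1
  rw [map_sum]
  refine Finset.sum_congr rfl fun j _ => ?_
  rw [map_sum]
  refine Finset.sum_congr rfl fun k _ => ?_
  simp only [map_mul, Complex.conj_conj]

lemma posdef_re {f : G → ℂ} (hf : IsPosDef f) :
    IsPosDef (fun x => ((f x).re : ℂ)) := by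
  have : (fun x : G => ((f x).re : ℂ))
      = fun x => ((1/2 : ℝ) : ℂ) * (f x + (starRingEnd ℂ) (f x)) := by
    funext x
    rw [Complex.add_conj]
    push_cast
    ring
  rw [this]
  exact posdef_smul (posdef_add hf (posdef_conj hf)) (by norm_num)

lemma posdef_mul_char {f γ : G → ℂ} (hf : IsPosDef f)
    (hγ : ∀ a b : G, γ (a - b) = γ a * (starRingEnd ℂ) (γ b)) :
    IsPosDef (fun x => f x * γ x) := by
  intro n x c
  have h := hf n x (fun j => c j * γ (x j))
  convert h using 1
  refine Finset.sum_congr rfl fun j _ => ?_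
  refine Finset.sum_congr rfl fun k _ => ?_
  simp only [hγ (x j) (x k), map_mul]
  ring

lemma posdef_delta [DecidableEq G] [Fintype G] :
    IsPosDef (fun x : G => if x = 0 then (1:ℂ) else 0) := by
  intro n x c
  set S : G → ℂ := fun v => ∑ j ∈ Finset.univ.filter (fun j => x j = v), c j with hS
  have step1 : ∀ j : Fin n, ∑ k, c j * (starRingEnd ℂ) (c k) * (if x j - x k = 0 then (1:ℂ) else 0)
      = c j * (starRingEnd ℂ) (S (x j)) := by
    intro j
    rw [hS, map_sum, Finset.mul_sum, ← Finset.sum_filter_of_ne (p := fun k => x k = x j)]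
    · refine Finset.sum_congr ?_ fun k hk => ?_
      · ext k; simp [eq_comm]
      · rw [Finset.mem_filter] at hk
        simp [hk.2, sub_eq_zero]
    · intro k _ hne
      by_contra hxk
      rw [if_neg (fun hh => hxk (by rw [sub_eq_zero] at hh; exact hh.symm)), mul_zero] at hne
      exact hne rfl
  calc (0:ℂ) ≤ ∑ v : G, S v * (starRingEnd ℂ) (S v) := by
        refine Finset.sum_nonneg fun v _ => ?_
        rw [Complex.mul_conj]
        exact Complex.zero_le_real.mpr (Complex.normSq_nonneg _)
    _ = ∑ j, c j * (starRingEnd ℂ) (S (x j)) := by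
        rw [← Finset.sum_fiberwise Finset.univ x (fun j => c j * (starRingEnd ℂ) (S (x j)))]
        refine Finset.sum_congr rfl fun v _ => ?_
        rw [eq_comm]
        calc ∑ j ∈ Finset.univ.filter (fun j => x j = v), c j * (starRingEnd ℂ) (S (x j))
            = ∑ j ∈ Finset.univ.filter (fun j => x j = v), c j * (starRingEnd ℂ) (S v) := by
              refine Finset.sum_congr rfl fun j hj => ?_
              rw [Finset.mem_filter] at hj
              rw [hj.2]
          _ = S v * (starRingEnd ℂ) (S v) := by rw [← Finset.sum_mul]
    _ = ∑ j, ∑ k, c j * (starRingEnd ℂ) (c k) * (if x j - x k = 0 then (1:ℂ) else 0) :=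
        (Finset.sum_congr rfl fun j _ => (step1 j)).symm


def gam (m : ℕ) (j : ℤ) (x : ZMod m) : ℂ :=
  Complex.exp (2 * Real.pi * Complex.I * j * x.val / m)

lemma conj_gam (m : ℕ) (j : ℤ) (x : ZMod m) :
    (starRingEnd ℂ) (gam m j x) = Complex.exp (-(2 * Real.pi * Complex.I * j * x.val / m)) := by
  rw [gam, ← Complex.exp_conj]
  congr 1
  simp only [map_div₀, map_mul, Complex.conj_I, Complex.conj_ofReal, map_ofNat,
    map_intCast, map_natCast]
  ring

lemma gam_sub {m : ℕ} [NeZero m] (j : ℤ) (a b : ZMod m) :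
    gam m j (a - b) = gam m j a * (starRingEnd ℂ) (gam m j b) := by
  rw [conj_gam, gam, gam, ← Complex.exp_add]
  have hdvd : (m:ℤ) ∣ (((a - b).val : ℤ) - ((a.val : ℤ) - (b.val : ℤ))) := by
    refine (ZMod.intCast_zmod_eq_zero_iff_dvd _ m).mp ?_
    push_cast [ZMod.natCast_val, ZMod.cast_id]
    ring
  obtain ⟨k, hk⟩ := hdvd
  rw [Complex.exp_eq_exp_iff_exists_int]
  refine ⟨j * k, ?_⟩
  have hm : (m : ℂ) ≠ 0 := by
    exact_mod_cast Nat.cast_ne_zero.mpr (NeZero.ne m)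
  have hval : (((a - b).val : ℤ) : ℂ) = ((a.val : ℤ) : ℂ) - ((b.val : ℤ) : ℂ) + (m:ℂ) * (k:ℂ) := by
    have : ((a - b).val : ℤ) = ((a.val : ℤ) - (b.val : ℤ)) + (m:ℤ) * k := by omega
    exact_mod_cast congrArg (Int.cast : ℤ → ℂ) this
  push_cast at hval ⊢
  rw [hval]
  field_simp
  ring

lemma gam_zero {m : ℕ} [NeZero m] (j : ℤ) : gam m j 0 = 1 := by
  rw [gam, ZMod.val_zero]
  simp

lemma gam_one {m : ℕ} [NeZero m] (j : ℤ) :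
    gam m j 1 = Complex.exp (2 * Real.pi * Complex.I * j / m) := by
  rw [gam]
  have hdvd : (m:ℤ) ∣ (((1 : ZMod m).val : ℤ) - 1) := by
    refine (ZMod.intCast_zmod_eq_zero_iff_dvd _ m).mp ?_
    push_cast [ZMod.natCast_val, ZMod.cast_id]
    ring
  obtain ⟨k, hk⟩ := hdvd
  rw [Complex.exp_eq_exp_iff_exists_int]
  refine ⟨j * k, ?_⟩
  have hm : (m : ℂ) ≠ 0 := by
    exact_mod_cast Nat.cast_ne_zero.mpr (NeZero.ne m)
  have hval : (((1 : ZMod m).val : ℤ) : ℂ) = 1 + (m:ℂ) * (k:ℂ) := by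
    have : ((1 : ZMod m).val : ℤ) = 1 + (m:ℤ) * k := by omega
    exact_mod_cast congrArg (Int.cast : ℤ → ℂ) this
  push_cast at hval ⊢
  rw [hval]
  field_simp

lemma rot (m : ℕ) (hm : 1 ≤ m) (z : ℂ) :
    ∃ j : ℤ, Real.cos (Real.pi / m) * ‖z‖
      ≤ (z * Complex.exp (2 * Real.pi * Complex.I * j / m)).re := by
  rcases eq_or_ne z 0 with rfl | hz
  · exact ⟨0, by simp⟩
  have hmpos : (0:ℝ) < m := by exact_mod_cast Nat.lt_of_lt_of_le Nat.zero_lt_one hm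
  set θ := Complex.arg z with hθ
  set j := round (-θ * m / (2 * Real.pi)) with hj
  refine ⟨j, ?_⟩
  set t : ℝ := θ + 2 * Real.pi * j / m with htdef
  have hre : (z * Complex.exp (2 * Real.pi * Complex.I * j / m)).re
      = ‖z‖ * Real.cos t := by
    conv_lhs => rw [← Complex.norm_mul_exp_arg_mul_I z]
    rw [mul_assoc, ← Complex.exp_add]
    have : (Complex.arg z : ℂ) * Complex.I + 2 * Real.pi * Complex.I * j / m
        = ((t : ℝ) : ℂ) * Complex.I := by
      rw [htdef, hθ]
      push_cast
      have hmC : (m : ℂ) ≠ 0 := by exact_mod_cast ne_of_gt hmpos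
      field_simp
    rw [this, Complex.re_ofReal_mul, Complex.exp_ofReal_mul_I_re]
  rw [hre]
  have hround := abs_sub_round (-θ * m / (2 * Real.pi))
  have ht : |t| ≤ Real.pi / m := by
    have hteq : t = -(2 * Real.pi / m) * (-θ * m / (2 * Real.pi) - j) := by
      rw [htdef]
      field_simp
      ring
    rw [hteq, abs_mul, abs_neg, abs_of_pos (by positivity)]
    calc 2 * Real.pi / m * |(-θ * m / (2 * Real.pi) - j)|
        ≤ 2 * Real.pi / m * (1/2) := by
          exact mul_le_mul_of_nonneg_left hround (by positivity)
      _ = Real.pi / m := by ring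
  have hcos : Real.cos (Real.pi / m) ≤ Real.cos t := by
    rw [← Real.cos_abs t]
    exact Real.cos_le_cos_of_nonneg_of_le_pi (abs_nonneg t)
      (by
        rw [div_le_iff₀ hmpos]
        have hm1 : (1:ℝ) ≤ m := by exact_mod_cast hm
        nlinarith [Real.pi_pos, hm1]) ht
  rw [mul_comm (‖z‖) (Real.cos t)]
  exact mul_le_mul_of_nonneg_right hcos (norm_nonneg z)

end Aux15

end

noncomputable section

theorem stmt15 (m : ℕ) (hm : 1 ≤ m) (H : Set (ZMod m))
    (hsym : ∀ x ∈ H, -x ∈ H) (h0 : (0 : ZMod m) ∈ H) (h1 : (1 : ZMod m) ∈ H) :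
    Real.cos (Real.pi / m) *
        sSup {s : ℝ | ∃ φ : ZMod m → ℂ, IsPosDef φ ∧ φ 0 = 1 ∧
          (∀ x ∉ H, φ x = 0) ∧ ‖φ 1‖ = s} ≤
      sSup {s : ℝ | ∃ φ : ZMod m → ℝ, IsPosDef (fun x => ((φ x : ℝ) : ℂ)) ∧ φ 0 = 1 ∧
        (∀ x ∉ H, φ x = 0) ∧ φ 1 = s} ∧
    sSup {s : ℝ | ∃ φ : ZMod m → ℝ, IsPosDef (fun x => ((φ x : ℝ) : ℂ)) ∧ φ 0 = 1 ∧
        (∀ x ∉ H, φ x = 0) ∧ φ 1 = s} ≤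
      sSup {s : ℝ | ∃ φ : ZMod m → ℂ, IsPosDef φ ∧ φ 0 = 1 ∧
        (∀ x ∉ H, φ x = 0) ∧ ‖φ 1‖ = s} := by
  classical
  haveI : NeZero m := ⟨by omega⟩
  set SC := {s : ℝ | ∃ φ : ZMod m → ℂ, IsPosDef φ ∧ φ 0 = 1 ∧
    (∀ x ∉ H, φ x = 0) ∧ ‖φ 1‖ = s} with hSCdef
  set SR := {s : ℝ | ∃ φ : ZMod m → ℝ, IsPosDef (fun x => ((φ x : ℝ) : ℂ)) ∧ φ 0 = 1 ∧
    (∀ x ∉ H, φ x = 0) ∧ φ 1 = s} with hSRdef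
  -- the delta function witnesses
  have hδpd : IsPosDef (fun x : ZMod m => if x = 0 then (1:ℂ) else 0) := Aux15.posdef_delta
  have hmemC : ‖(if (1 : ZMod m) = 0 then (1:ℂ) else 0)‖ ∈ SC := by
    refine ⟨fun x => if x = 0 then 1 else 0, hδpd, by simp, fun x hx => ?_, rfl⟩
    have hxne : x ≠ 0 := fun h => hx (h ▸ h0)
    simp [hxne]
  have hmemR : (if (1 : ZMod m) = 0 then (1:ℝ) else 0) ∈ SR := by
    refine ⟨fun x => if x = 0 then 1 else 0, ?_, by simp, fun x hx => ?_, rfl⟩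
    · have heq : (fun x : ZMod m => (((if x = 0 then (1:ℝ) else 0) : ℝ) : ℂ))
        = fun x : ZMod m => if x = 0 then (1:ℂ) else 0 := by
        funext x
        by_cases h : x = 0 <;> simp [h]
      exact heq ▸ hδpd
    · have hxne : x ≠ 0 := fun h => hx (h ▸ h0)
      simp [hxne]
  -- bounds
  have hbC : ∀ s ∈ SC, s ≤ 1 := by
    rintro s ⟨φ, hpd, hφ0, hφH, rfl⟩
    exact Aux15.abs_le_one hpd hφ0 1
  have hbR : ∀ s ∈ SR, s ≤ 1 := by
    rintro s ⟨φ, hpd, hφ0, hφH, rfl⟩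
    calc φ 1 ≤ |φ 1| := le_abs_self _
      _ = ‖((φ 1 : ℝ) : ℂ)‖ := (by rw [Complex.norm_real, Real.norm_eq_abs])
      _ ≤ 1 := Aux15.abs_le_one hpd (by simp [hφ0]) 1
  have hBC : BddAbove SC := ⟨1, fun s hs => hbC s hs⟩
  have hBR : BddAbove SR := ⟨1, fun s hs => hbR s hs⟩
  have hneC : SC.Nonempty := ⟨_, hmemC⟩
  have hneR : SR.Nonempty := ⟨_, hmemR⟩
  have hRnn : (0:ℝ) ≤ sSup SR := by
    refine le_trans ?_ (le_csSup hBR hmemR)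
    by_cases h : (1 : ZMod m) = 0 <;> simp [h]
  have hCnn : (0:ℝ) ≤ sSup SC :=
    le_trans (norm_nonneg _) (le_csSup hBC hmemC)
  -- the key rotation step
  have key : ∀ s ∈ SC, Real.cos (Real.pi / m) * s ≤ sSup SR := by
    rintro s ⟨φ, hpd, hφ0, hφH, rfl⟩
    obtain ⟨j, hj⟩ := Aux15.rot m hm (φ 1)
    have hmem : (φ 1 * Aux15.gam m j 1).re ∈ SR := by
      refine ⟨fun x => (φ x * Aux15.gam m j x).re, ?_, ?_, fun x hx => ?_, rfl⟩
      · exact Aux15.posdef_re (Aux15.posdef_mul_char hpd (fun a b => Aux15.gam_sub j a b))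
      · show (φ 0 * Aux15.gam m j 0).re = 1
        rw [hφ0, Aux15.gam_zero]
        simp
      · show (φ x * Aux15.gam m j x).re = 0
        rw [hφH x hx]
        simp
    refine le_trans ?_ (le_csSup hBR hmem)
    rw [Aux15.gam_one]
    exact hj
  constructor
  · rcases le_or_gt (Real.cos (Real.pi / m)) 0 with hc | hc
    · exact le_trans (mul_nonpos_iff.mpr (Or.inr ⟨hc, hCnn⟩)) hRnn
    · have h1' : sSup SC ≤ sSup SR / Real.cos (Real.pi / m) :=
        csSup_le hneC fun s hs => (le_div_iff₀ hc).mpr (by rw [mul_comm]; exact key s hs)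
      calc Real.cos (Real.pi / m) * sSup SC
          ≤ Real.cos (Real.pi / m) * (sSup SR / Real.cos (Real.pi / m)) :=
            mul_le_mul_of_nonneg_left h1' hc.le
        _ = sSup SR := by field_simp
  · refine csSup_le hneR ?_
    rintro s ⟨φ, hpd, hφ0, hφH, rfl⟩
    have hmem : ‖((φ 1 : ℝ) : ℂ)‖ ∈ SC := by
      refine ⟨fun x => ((φ x : ℝ) : ℂ), hpd, by simp [hφ0], fun x hx => ?_, rfl⟩
      simp [hφH x hx]
    calc φ 1 ≤ |φ 1| := le_abs_self _
      _ = ‖((φ 1 : ℝ) : ℂ)‖ := (by rw [Complex.norm_real, Real.norm_eq_abs])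
      _ ≤ sSup SC := le_csSup hBC hmem
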